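/- Let F be a finite poset, Q a finite rooted poset with root ⊥. If there exists an up-reduction from F onto Q (a surjective p-morphism from an upward-closed subset of F onto Q), then there exists a pointed up-reduction: a surjective p-morphism f : ↑x → Q for some x ∈ F with f⁻¹{⊥} = {x}. -/

import Mathlib

/-- If a finite poset `F` up-reduces onto a finite rooted poset `Q` (surjective
p-morphism from an upward-closed subset of `F` onto `Q`), then there is a
pointed up-reduction: a surjective p-morphism `f : ↑x → Q` whose only preimage
of the root `⊥` is `x` itself. -/
theorem stmt10 {F Q : Type*} [Fintype F] [PartialOrder F]
    [Fintype Q] [PartialOrder Q] [OrderBot Q]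
    (h : ∃ (U : Set F) (f : F → Q),
      (∀ ⦃x y : F⦄, x ≤ y → x ∈ U → y ∈ U) ∧
      (∀ x ∈ U, f '' (Set.Ici x) = Set.Ici (f x)) ∧
      Set.SurjOn f U Set.univ) :
    ∃ (x : F) (f : F → Q),
      (∀ y ∈ Set.Ici x, f '' (Set.Ici y) = Set.Ici (f y)) ∧
      Set.SurjOn f (Set.Ici x) Set.univ ∧
      {y ∈ Set.Ici x | f y = ⊥} = {x} := by
  obtain ⟨U, f, hU, hpm, hsurj⟩ := h
  -- the set of points in U mapping to ⊥ is nonempty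
  obtain ⟨z, hzU, hz⟩ := hsurj (Set.mem_univ (⊥ : Q))
  have hne : ({y | y ∈ U ∧ f y = ⊥} : Set F).Nonempty := ⟨z, hzU, hz⟩
  obtain ⟨x, hx, hmax⟩ := (Set.toFinite {y | y ∈ U ∧ f y = ⊥}).exists_maximalFor
    id _ hne
  obtain ⟨hxU, hfx⟩ := hx
  refine ⟨x, f, ?_, ?_, ?_⟩
  · intro y hy
    exact hpm y (hU hy hxU)
  · intro q _
    have : q ∈ f '' Set.Ici x := by
      rw [hpm x hxU, hfx]
      exact bot_le
    obtain ⟨y, hy, hfy⟩ := this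
    exact ⟨y, hy, hfy⟩
  · ext y
    simp only [Set.mem_setOf_eq, Set.mem_singleton_iff, Set.mem_Ici]
    constructor
    · rintro ⟨hxy, hfy⟩
      exact le_antisymm (hmax ⟨hU hxy hxU, hfy⟩ hxy) hxy
    · rintro rfl
      exact ⟨le_refl _, hfx⟩
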